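/- Let N ∈ ℕ, k ∈ {0,...,N}, p ≥ 0, X an ℕ-valued random variable with finite p-th moment, and Y an ℕ-valued random variable independent of X with finite (N−k+1+p)-th moment. For f : ℕ → ℝ with f(x) = O(x^p), setting ‖f‖_{N,p} = sup_{x ≥ 1} |Δ^{N+1}f(x)|/x^p, the discrete Taylor remainder satisfies |δ_{N−k}(Δ^k f(·+1), X, Y)| ≤ max(2^{p−1}, 1)·‖f‖_{N,p}·( E[X^p]·m_Y^{(N−k+1)} + m_Y^{(N−k+1),p} ), where m_Y^{(j)} = E[C(Y,j)] and m_Y^{(j),p} = E[C(Y,j)·Y^p]. -/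

import Mathlib

open MeasureTheory ProbabilityTheory Filter
open scoped NNReal

/-- Forward difference operator on functions `ℕ → ℝ`. -/
def fdiff (f : ℕ → ℝ) : ℕ → ℝ := fun x => f (x + 1) - f x

/-- The sum `Σ_{0 ≤ j_1 < ... < j_{M+1} < y} Δ^{M+1} f(x + j_1)`: strictly increasing
`(M+1)`-tuples in `{0,…,y−1}` are identified with `(M+1)`-element subsets of
`Finset.range y`, with `j_1` the least element. -/
noncomputable def tupleSum (f : ℕ → ℝ) (x y M : ℕ) : ℝ :=
  ∑ s ∈ (Finset.range y).powersetCard (M + 1), fdiff^[M + 1] f (x + WithTop.untopD 0 s.min)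

/-- `‖f‖_{N,p} = sup_{x ≥ 1} |Δ^{N+1}f(x)|/x^p` (the supremum over `x ≥ 1` is written
with the shifted index `x + 1`). -/
noncomputable def fNorm (N : ℕ) (p : ℝ) (f : ℕ → ℝ) : ℝ :=
  ⨆ x : ℕ, |fdiff^[N + 1] f (x + 1)| / ((x : ℝ) + 1) ^ p

lemma fdiff_shift (a : ℕ) : ∀ g : ℕ → ℝ,
    fdiff^[a] (fun x => g (x + 1)) = fun x => fdiff^[a] g (x + 1) := by
  induction a with
  | zero => intro g; rfl
  | succ n ih =>
    intro g
    rw [Function.iterate_succ_apply, Function.iterate_succ_apply]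
    have h : fdiff (fun x => g (x + 1)) = fun x => fdiff g (x + 1) := rfl
    rw [h, ih (fdiff g)]

lemma key_ineq {p : ℝ} (hp : 0 ≤ p) {a b : ℝ} (ha : 0 ≤ a) (hb : 0 ≤ b) :
    (a + b) ^ p ≤ max ((2 : ℝ) ^ (p - 1)) 1 * (a ^ p + b ^ p) := by
  rcases le_or_gt 1 p with h1 | h1
  · have h := NNReal.rpow_add_le_mul_rpow_add_rpow a.toNNReal b.toNNReal h1
    have h' := NNReal.coe_le_coe.2 h
    push_cast [Real.coe_toNNReal a ha, Real.coe_toNNReal b hb] at h'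
    calc (a + b) ^ p ≤ (2 : ℝ) ^ (p - 1) * (a ^ p + b ^ p) := h'
      _ ≤ max ((2 : ℝ) ^ (p - 1)) 1 * (a ^ p + b ^ p) := by
          apply mul_le_mul_of_nonneg_right (le_max_left _ _)
          positivity
  · have h := NNReal.rpow_add_le_add_rpow a.toNNReal b.toNNReal hp h1.le
    have h' := NNReal.coe_le_coe.2 h
    push_cast [Real.coe_toNNReal a ha, Real.coe_toNNReal b hb] at h'
    calc (a + b) ^ p ≤ a ^ p + b ^ p := h'
      _ ≤ max ((2 : ℝ) ^ (p - 1)) 1 * (a ^ p + b ^ p) := by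
          nlinarith [le_max_right ((2:ℝ)^(p-1)) 1, Real.rpow_nonneg ha p, Real.rpow_nonneg hb p]

lemma bddAbove_of_eventually {u : ℕ → ℝ} {C : ℝ} (h : ∀ᶠ n in atTop, u n ≤ C) :
    BddAbove (Set.range u) := by
  obtain ⟨n₀, hn₀⟩ := eventually_atTop.mp h
  have hsub : Set.range u ⊆ (u '' Set.Iio n₀) ∪ Set.Iic C := by
    rintro _ ⟨n, rfl⟩
    rcases lt_or_ge n n₀ with h' | h'
    · exact Or.inl ⟨n, h', rfl⟩
    · exact Or.inr (hn₀ n h')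
  exact (((Set.finite_Iio n₀).image u).bddAbove.union bddAbove_Iic).mono hsub

lemma shift_isBigO {p : ℝ} (hp : 0 ≤ p) :
    (fun x : ℕ => ((x : ℝ) + 1) ^ p) =O[atTop] fun x : ℕ => (x : ℝ) ^ p := by
  rw [Asymptotics.isBigO_iff]
  refine ⟨(2 : ℝ) ^ p, ?_⟩
  filter_upwards [eventually_ge_atTop 1] with x hx
  have hx1 : (1 : ℝ) ≤ (x : ℝ) := by exact_mod_cast hx
  rw [Real.norm_eq_abs, Real.norm_eq_abs, abs_of_nonneg (Real.rpow_nonneg (by linarith) p),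
    abs_of_nonneg (Real.rpow_nonneg (by linarith) p)]
  calc ((x : ℝ) + 1) ^ p ≤ (2 * (x : ℝ)) ^ p :=
        Real.rpow_le_rpow (by linarith) (by linarith) hp
    _ = 2 ^ p * (x : ℝ) ^ p := Real.mul_rpow (by norm_num) (by linarith)

lemma fdiff_isBigO {f : ℕ → ℝ} {p : ℝ} (hp : 0 ≤ p)
    (hf : (fun x : ℕ => f x) =O[atTop] fun x : ℕ => (x : ℝ) ^ p) (n : ℕ) :
    (fun x : ℕ => fdiff^[n] f x) =O[atTop] fun x : ℕ => (x : ℝ) ^ p := by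
  induction n with
  | zero => exact hf
  | succ m ih =>
    have h1 : (fun x : ℕ => fdiff^[m] f (x + 1)) =O[atTop] fun x : ℕ => (x : ℝ) ^ p := by
      have hc := ih.comp_tendsto (tendsto_add_atTop_nat 1)
      have h2 : ((fun x : ℕ => (x : ℝ) ^ p) ∘ fun a => a + 1) =O[atTop]
          fun x : ℕ => (x : ℝ) ^ p :=
        (shift_isBigO hp).congr_left (fun x => by simp [Function.comp])
      exact hc.trans h2
    have heq : (fun x : ℕ => fdiff^[m + 1] f x)
        = fun x : ℕ => fdiff^[m] f (x + 1) - fdiff^[m] f x := by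
      funext x; rw [Function.iterate_succ_apply']; rfl
    rw [heq]
    exact h1.sub ih

lemma choose_le_rpow {p : ℝ} (hp : 0 ≤ p) {j : ℕ} (hj : 1 ≤ j) (n : ℕ) :
    (n.choose j : ℝ) ≤ (n : ℝ) ^ ((j : ℝ) + p) := by
  rcases Nat.eq_zero_or_pos n with rfl | hn
  · rw [Nat.choose_eq_zero_of_lt (by omega)]
    simp only [Nat.cast_zero]
    rw [Real.zero_rpow (by positivity)]
  · have hn1 : (1 : ℝ) ≤ (n : ℝ) := by exact_mod_cast hn
    calc (n.choose j : ℝ) ≤ ((n ^ j : ℕ) : ℝ) := by exact_mod_cast Nat.choose_le_pow n j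
      _ = (n : ℝ) ^ (j : ℝ) := by push_cast; rw [Real.rpow_natCast]
      _ ≤ (n : ℝ) ^ ((j : ℝ) + p) := Real.rpow_le_rpow_of_exponent_le hn1 (by linarith)

lemma choose_mul_le_rpow {p : ℝ} (hp : 0 ≤ p) {j : ℕ} (hj : 1 ≤ j) (n : ℕ) :
    (n.choose j : ℝ) * (n : ℝ) ^ p ≤ (n : ℝ) ^ ((j : ℝ) + p) := by
  rcases Nat.eq_zero_or_pos n with rfl | hn
  · rw [Nat.choose_eq_zero_of_lt (by omega)]
    simp only [Nat.cast_zero, zero_mul]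
    rw [Real.zero_rpow (by positivity)]
  · have hn0 : (0 : ℝ) < (n : ℝ) := by exact_mod_cast hn
    calc (n.choose j : ℝ) * (n : ℝ) ^ p ≤ (n : ℝ) ^ (j : ℝ) * (n : ℝ) ^ p := by
          apply mul_le_mul_of_nonneg_right _ (Real.rpow_nonneg hn0.le p)
          calc (n.choose j : ℝ) ≤ ((n ^ j : ℕ) : ℝ) := by exact_mod_cast Nat.choose_le_pow n j
            _ = (n : ℝ) ^ (j : ℝ) := by push_cast; rw [Real.rpow_natCast]
      _ = (n : ℝ) ^ ((j : ℝ) + p) := (Real.rpow_add hn0 _ _).symm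

lemma fNorm_nonneg (N : ℕ) {p : ℝ} (f : ℕ → ℝ) : 0 ≤ fNorm N p f :=
  Real.iSup_nonneg fun z => div_nonneg (abs_nonneg _) (Real.rpow_nonneg (by positivity) p)

lemma tupleSum_bound (N k : ℕ) (hk : k ≤ N) {p : ℝ} (hp : 0 ≤ p) (f : ℕ → ℝ)
    (hbdd : BddAbove (Set.range fun x : ℕ => |fdiff^[N + 1] f (x + 1)| / ((x : ℝ) + 1) ^ p))
    (x y : ℕ) :
    |tupleSum (fun z => fdiff^[k] f (z + 1)) x y (N - k)|
      ≤ max ((2 : ℝ) ^ (p - 1)) 1 * fNorm N p f *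
          ((y.choose (N - k + 1) : ℝ) * ((x : ℝ) ^ p + (y : ℝ) ^ p)) := by
  have hnorm0 : 0 ≤ fNorm N p f := fNorm_nonneg N f
  set M := N - k with hM
  have hiter : fdiff^[M + 1] (fun z => fdiff^[k] f (z + 1))
      = fun z => fdiff^[N + 1] f (z + 1) := by
    rw [fdiff_shift]
    funext z
    rw [← Function.iterate_add_apply fdiff (M + 1) k f, show M + 1 + k = N + 1 by omega]
  have hterm : ∀ s ∈ (Finset.range y).powersetCard (M + 1),
      |fdiff^[M + 1] (fun z => fdiff^[k] f (z + 1)) (x + WithTop.untopD 0 s.min)|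
        ≤ fNorm N p f * (max ((2 : ℝ) ^ (p - 1)) 1 * ((x : ℝ) ^ p + (y : ℝ) ^ p)) := by
    intro s hs
    rw [Finset.mem_powersetCard] at hs
    obtain ⟨hsub, hcard⟩ := hs
    have hne : s.Nonempty := Finset.card_pos.mp (by omega)
    have hmin : WithTop.untopD 0 s.min = s.min' hne := by
      rw [← Finset.coe_min' hne]; rfl
    set m := s.min' hne with hm
    have hmy : m < y := Finset.mem_range.mp (hsub (s.min'_mem hne))
    rw [hiter, hmin]
    have hsup := le_ciSup hbdd (x + m)
    rw [div_le_iff₀ (by positivity)] at hsup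
    calc |fdiff^[N + 1] f (x + m + 1)| ≤ fNorm N p f * (((x + m : ℕ) : ℝ) + 1) ^ p := hsup
      _ ≤ fNorm N p f * ((x : ℝ) + (y : ℝ)) ^ p := by
          apply mul_le_mul_of_nonneg_left _ hnorm0
          apply Real.rpow_le_rpow (by positivity) _ hp
          push_cast
          have : (m : ℝ) + 1 ≤ (y : ℝ) := by exact_mod_cast hmy
          linarith
      _ ≤ fNorm N p f * (max ((2 : ℝ) ^ (p - 1)) 1 * ((x : ℝ) ^ p + (y : ℝ) ^ p)) := by
          apply mul_le_mul_of_nonneg_left _ hnorm0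
          exact key_ineq hp (by positivity) (by positivity)
  calc |tupleSum (fun z => fdiff^[k] f (z + 1)) x y M|
      ≤ ∑ s ∈ (Finset.range y).powersetCard (M + 1),
          |fdiff^[M + 1] (fun z => fdiff^[k] f (z + 1)) (x + WithTop.untopD 0 s.min)| :=
        Finset.abs_sum_le_sum_abs _ _
    _ ≤ ((Finset.range y).powersetCard (M + 1)).card
          • (fNorm N p f * (max ((2 : ℝ) ^ (p - 1)) 1 * ((x : ℝ) ^ p + (y : ℝ) ^ p))) :=
        Finset.sum_le_card_nsmul _ _ _ hterm
    _ = (y.choose (M + 1) : ℝ)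
          * (fNorm N p f * (max ((2 : ℝ) ^ (p - 1)) 1 * ((x : ℝ) ^ p + (y : ℝ) ^ p))) := by
        rw [Finset.card_powersetCard, Finset.card_range, nsmul_eq_mul]
    _ = max ((2 : ℝ) ^ (p - 1)) 1 * fNorm N p f
          * ((y.choose (M + 1) : ℝ) * ((x : ℝ) ^ p + (y : ℝ) ^ p)) := by ring

/-- Estimate of the discrete Taylor remainder:
`|δ_{N−k}(Δ^k f(·+1), X, Y)| ≤ max(2^{p−1},1)·‖f‖_{N,p}·(E[X^p]·m_Y^{(N−k+1)} + m_Y^{(N−k+1),p})`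
where `m_Y^{(j)} = E[C(Y,j)]` and `m_Y^{(j),p} = E[C(Y,j)·Y^p]`. -/
theorem taylor_remainder_estimate {Ω : Type*} [MeasurableSpace Ω] (μ : Measure Ω)
    [IsProbabilityMeasure μ] (N k : ℕ) (hk : k ≤ N) (p : ℝ) (hp : 0 ≤ p)
    (X Y : Ω → ℕ) (hX : Measurable X) (hY : Measurable Y) (hindep : IndepFun X Y μ)
    (hXp : Integrable (fun ω => ((X ω : ℝ)) ^ p) μ)
    (hYmom : Integrable (fun ω => ((Y ω : ℝ)) ^ ((N : ℝ) - (k : ℝ) + 1 + p)) μ)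
    (f : ℕ → ℝ) (hf : (fun x : ℕ => f x) =O[atTop] fun x : ℕ => (x : ℝ) ^ p) :
    |∫ ω, tupleSum (fun x => fdiff^[k] f (x + 1)) (X ω) (Y ω) (N - k) ∂μ|
      ≤ max ((2 : ℝ) ^ (p - 1)) 1 * fNorm N p f *
          ((∫ ω, ((X ω : ℝ)) ^ p ∂μ) * (∫ ω, ((Y ω).choose (N - k + 1) : ℝ) ∂μ)
            + ∫ ω, ((Y ω).choose (N - k + 1) : ℝ) * ((Y ω : ℝ)) ^ p ∂μ) := by
  set j := N - k + 1 with hj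
  have hj1 : 1 ≤ j := by omega
  -- boundedness of the sup defining fNorm
  have hbdd : BddAbove
      (Set.range fun x : ℕ => |fdiff^[N + 1] f (x + 1)| / ((x : ℝ) + 1) ^ p) := by
    obtain ⟨C, hC⟩ := (fdiff_isBigO hp hf (N + 1)).bound
    apply bddAbove_of_eventually (C := C)
    have hC' := (tendsto_add_atTop_nat 1).eventually hC
    filter_upwards [hC', eventually_ge_atTop 1] with x hx hx1
    rw [Real.norm_eq_abs, Real.norm_eq_abs,
      abs_of_nonneg (Real.rpow_nonneg (by positivity) p)] at hx
    rw [div_le_iff₀ (by positivity)]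
    calc |fdiff^[N + 1] f (x + 1)| ≤ C * ((x + 1 : ℕ) : ℝ) ^ p := hx
      _ = C * ((x : ℝ) + 1) ^ p := by push_cast; ring_nf
  -- the pointwise bound
  have hbound := tupleSum_bound N k hk hp f hbdd
  -- rewrite the moment hypothesis
  have hjc : ((j : ℝ) + p) = (N : ℝ) - (k : ℝ) + 1 + p := by
    rw [hj]; push_cast [hk]; ring
  have hYmom' : Integrable (fun ω => ((Y ω : ℝ)) ^ ((j : ℝ) + p)) μ := by
    rw [hjc]; exact hYmom
  -- integrability of the choose moments
  have hC : Integrable (fun ω => ((Y ω).choose j : ℝ)) μ := by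
    refine hYmom'.mono'
      (((measurable_of_countable fun n : ℕ => (n.choose j : ℝ)).comp hY).aestronglyMeasurable)
      (ae_of_all _ fun ω => ?_)
    rw [Real.norm_eq_abs, abs_of_nonneg (by positivity)]
    exact choose_le_rpow hp hj1 _
  have hCY : Integrable (fun ω => ((Y ω).choose j : ℝ) * ((Y ω : ℝ)) ^ p) μ := by
    refine hYmom'.mono'
      (((measurable_of_countable fun n : ℕ => (n.choose j : ℝ) * (n : ℝ) ^ p).comp
        hY).aestronglyMeasurable)
      (ae_of_all _ fun ω => ?_)
    rw [Real.norm_eq_abs, abs_of_nonneg (by positivity)]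
    exact choose_mul_le_rpow hp hj1 _
  -- independence of the transformed variables
  have hi : IndepFun (fun ω => ((X ω : ℝ)) ^ p) (fun ω => ((Y ω).choose j : ℝ)) μ :=
    hindep.comp (measurable_of_countable fun n : ℕ => (n : ℝ) ^ p)
      (measurable_of_countable fun n : ℕ => (n.choose j : ℝ))
  have hXC : Integrable (fun ω => ((X ω : ℝ)) ^ p * ((Y ω).choose j : ℝ)) μ :=
    hi.integrable_mul hXp hC
  have hIeq : ∫ ω, ((X ω : ℝ)) ^ p * ((Y ω).choose j : ℝ) ∂μ
      = (∫ ω, ((X ω : ℝ)) ^ p ∂μ) * ∫ ω, ((Y ω).choose j : ℝ) ∂μ :=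
    hi.integral_mul_eq_mul_integral hXp.1 hC.1
  -- the dominating function
  set c : ℝ := max ((2 : ℝ) ^ (p - 1)) 1 * fNorm N p f with hc
  have hD : Integrable (fun ω =>
      c * (((Y ω).choose j : ℝ) * (((X ω : ℝ)) ^ p + ((Y ω : ℝ)) ^ p))) μ := by
    have h1 : Integrable (fun ω => ((X ω : ℝ)) ^ p * ((Y ω).choose j : ℝ)
        + ((Y ω).choose j : ℝ) * ((Y ω : ℝ)) ^ p) μ := hXC.add hCY
    have h2 : Integrable (fun ω =>
        ((Y ω).choose j : ℝ) * (((X ω : ℝ)) ^ p + ((Y ω : ℝ)) ^ p)) μ :=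
      h1.congr (ae_of_all _ fun ω => by ring)
    exact h2.const_mul c
  -- measurability and integrability of the integrand
  have hmeasG : Measurable (fun ω =>
      tupleSum (fun x => fdiff^[k] f (x + 1)) (X ω) (Y ω) (N - k)) :=
    (measurable_of_countable fun q : ℕ × ℕ =>
      tupleSum (fun x => fdiff^[k] f (x + 1)) q.1 q.2 (N - k)).comp (hX.prodMk hY)
  have hint : Integrable (fun ω =>
      tupleSum (fun x => fdiff^[k] f (x + 1)) (X ω) (Y ω) (N - k)) μ := by
    refine hD.mono' hmeasG.aestronglyMeasurable (ae_of_all _ fun ω => ?_)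
    rw [Real.norm_eq_abs]
    exact hbound (X ω) (Y ω)
  calc |∫ ω, tupleSum (fun x => fdiff^[k] f (x + 1)) (X ω) (Y ω) (N - k) ∂μ|
      ≤ ∫ ω, |tupleSum (fun x => fdiff^[k] f (x + 1)) (X ω) (Y ω) (N - k)| ∂μ :=
      by simpa [Real.norm_eq_abs] using
        norm_integral_le_integral_norm
          (fun ω => tupleSum (fun x => fdiff^[k] f (x + 1)) (X ω) (Y ω) (N - k)) (μ := μ)
    _ ≤ ∫ ω, c * (((Y ω).choose j : ℝ) * (((X ω : ℝ)) ^ p + ((Y ω : ℝ)) ^ p)) ∂μ :=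
        integral_mono hint.abs hD (fun ω => hbound (X ω) (Y ω))
    _ = c * ∫ ω, ((Y ω).choose j : ℝ) * (((X ω : ℝ)) ^ p + ((Y ω : ℝ)) ^ p) ∂μ :=
        integral_const_mul c _
    _ = c * ∫ ω, (((X ω : ℝ)) ^ p * ((Y ω).choose j : ℝ)
          + ((Y ω).choose j : ℝ) * ((Y ω : ℝ)) ^ p) ∂μ := by
        congr 1
        exact integral_congr_ae (ae_of_all _ fun ω => by ring)
    _ = c * ((∫ ω, ((X ω : ℝ)) ^ p ∂μ) * (∫ ω, ((Y ω).choose j : ℝ) ∂μ)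
          + ∫ ω, ((Y ω).choose j : ℝ) * ((Y ω : ℝ)) ^ p ∂μ) := by
        rw [integral_add hXC hCY, hIeq]
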